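/- Every Hanner polytope in $\mathbb{R}^n$ has Banach–Mazur distance exactly $\sqrt{n}$ to the $n$-dimensional Euclidean ball $\mathbb{B}_2^n$. -/

import Mathlib

open scoped ENNReal

/-- The (multiplicative) Banach–Mazur distance between two normed spaces:
the infimum of `‖T‖ * ‖T⁻¹‖` over invertible (continuous) linear maps `T : E → F`. -/
noncomputable def dBM (E F : Type*) [NormedAddCommGroup E] [NormedSpace ℝ E]
    [NormedAddCommGroup F] [NormedSpace ℝ F] : ℝ :=
  sInf {c : ℝ | ∃ T : E ≃L[ℝ] F, c = ‖(T : E →L[ℝ] F)‖ * ‖(T.symm : F →L[ℝ] E)‖}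

/-- A (normed space represented by a) Hanner polytope: either a `1`-dimensional space
(a symmetric segment), an `ℓ₁`- or `ℓ∞`-sum of two Hanner spaces, or an isometric
copy of a Hanner space. -/
inductive IsHanner : ∀ (X : Type) [NormedAddCommGroup X] [NormedSpace ℝ X], Prop where
  | segment (X : Type) [NormedAddCommGroup X] [NormedSpace ℝ X]
      (h : Module.finrank ℝ X = 1) : IsHanner X
  | sumOne (X Y : Type) [NormedAddCommGroup X] [NormedSpace ℝ X]
      [NormedAddCommGroup Y] [NormedSpace ℝ Y]
      (hX : IsHanner X) (hY : IsHanner Y) : IsHanner (WithLp 1 (X × Y))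
  | sumTop (X Y : Type) [NormedAddCommGroup X] [NormedSpace ℝ X]
      [NormedAddCommGroup Y] [NormedSpace ℝ Y]
      (hX : IsHanner X) (hY : IsHanner Y) : IsHanner (WithLp ∞ (X × Y))
  | congr (X Y : Type) [NormedAddCommGroup X] [NormedSpace ℝ X]
      [NormedAddCommGroup Y] [NormedSpace ℝ Y]
      (hX : IsHanner X) (e : X ≃ₗᵢ[ℝ] Y) : IsHanner Y

set_option maxHeartbeats 1000000
set_option linter.unusedSectionVars false

open Module Metric

section Helpers

variable {X Y F G : Type*} [NormedAddCommGroup X] [NormedSpace ℝ X]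
  [NormedAddCommGroup Y] [NormedSpace ℝ Y]
  [NormedAddCommGroup F] [NormedSpace ℝ F]

lemma dBM_le_norms (T : X ≃L[ℝ] F) :
    dBM X F ≤ ‖(T : X →L[ℝ] F)‖ * ‖(T.symm : F →L[ℝ] X)‖ := by
  apply csInf_le
  · exact ⟨0, by rintro c ⟨S, rfl⟩; positivity⟩
  · exact ⟨T, rfl⟩

lemma norms_le_of_bounds (T : X ≃L[ℝ] F) {C₁ C₂ : ℝ} (hC₁ : 0 ≤ C₁) (hC₂ : 0 ≤ C₂)
    (h₁ : ∀ x, ‖T x‖ ≤ C₁ * ‖x‖) (h₂ : ∀ y, ‖T.symm y‖ ≤ C₂ * ‖y‖) :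
    ‖(T : X →L[ℝ] F)‖ * ‖(T.symm : F →L[ℝ] X)‖ ≤ C₁ * C₂ := by
  have hT : ‖(T : X →L[ℝ] F)‖ ≤ C₁ := ContinuousLinearMap.opNorm_le_bound _ hC₁ h₁
  have hT' : ‖(T.symm : F →L[ℝ] X)‖ ≤ C₂ := ContinuousLinearMap.opNorm_le_bound _ hC₂ h₂
  exact mul_le_mul hT hT' (norm_nonneg _) hC₁

lemma le_norms_of_dBM_eq {c : ℝ} (hd : dBM X F = c) (T : X ≃L[ℝ] F) :
    c ≤ ‖(T : X →L[ℝ] F)‖ * ‖(T.symm : F →L[ℝ] X)‖ :=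
  hd ▸ dBM_le_norms T

lemma exists_CLE_lt {c : ℝ} (hd : dBM X F = c) (hc : 0 < c) {ε : ℝ} (hε : 0 < ε) :
    ∃ T : X ≃L[ℝ] F, ‖(T : X →L[ℝ] F)‖ * ‖(T.symm : F →L[ℝ] X)‖ < c + ε := by
  unfold dBM at hd
  have hne : {c : ℝ | ∃ T : X ≃L[ℝ] F,
      c = ‖(T : X →L[ℝ] F)‖ * ‖(T.symm : F →L[ℝ] X)‖}.Nonempty := by
    by_contra h
    rw [Set.not_nonempty_iff_eq_empty] at h
    rw [h, Real.sInf_empty] at hd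
    exact absurd hd.symm (ne_of_gt hc)
  obtain ⟨a, ⟨T, rfl⟩, h⟩ := exists_lt_of_csInf_lt hne
    (show sInf _ < c + ε by rw [hd]; linarith)
  exact ⟨T, h⟩

lemma one_le_norms [Nontrivial X] (T : X ≃L[ℝ] F) :
    1 ≤ ‖(T : X →L[ℝ] F)‖ * ‖(T.symm : F →L[ℝ] X)‖ := by
  have h : (1 : ℝ) = ‖ContinuousLinearMap.id ℝ X‖ := (ContinuousLinearMap.norm_id).symm
  calc (1 : ℝ) = ‖ContinuousLinearMap.id ℝ X‖ := h
    _ = ‖(T.symm : F →L[ℝ] X).comp (T : X →L[ℝ] F)‖ := by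
        congr 1
        ext x
        simp
    _ ≤ ‖(T.symm : F →L[ℝ] X)‖ * ‖(T : X →L[ℝ] F)‖ := ContinuousLinearMap.opNorm_comp_le _ _
    _ = _ := mul_comm _ _

lemma exists_CLE_of_inj [FiniteDimensional ℝ X] [NormedAddCommGroup G]
    [InnerProductSpace ℝ G] [FiniteDimensional ℝ G]
    (S : X →L[ℝ] G) (hinj : Function.Injective S) {C₁ C₂ : ℝ}
    (h₁ : ∀ x, ‖S x‖ ≤ C₁ * ‖x‖) (h₂ : ∀ x, ‖x‖ ≤ C₂ * ‖S x‖) :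
    ∃ T : X ≃L[ℝ] EuclideanSpace ℝ (Fin (finrank ℝ X)),
      (∀ x, ‖T x‖ ≤ C₁ * ‖x‖) ∧ (∀ y, ‖T.symm y‖ ≤ C₂ * ‖y‖) := by
  have hinj' : Function.Injective (S : X →ₗ[ℝ] G) := hinj
  let L : X ≃ₗ[ℝ] LinearMap.range (S : X →ₗ[ℝ] G) := LinearEquiv.ofInjective _ hinj'
  have hrank : finrank ℝ (LinearMap.range (S : X →ₗ[ℝ] G)) = finrank ℝ X :=
    LinearMap.finrank_range_of_inj hinj'
  let e : LinearMap.range (S : X →ₗ[ℝ] G) ≃ₗᵢ[ℝ] EuclideanSpace ℝ (Fin (finrank ℝ X)) :=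
    ((stdOrthonormalBasis ℝ _).reindex (finCongr hrank)).repr
  let T : X ≃L[ℝ] EuclideanSpace ℝ (Fin (finrank ℝ X)) :=
    (L.toContinuousLinearEquiv).trans e.toContinuousLinearEquiv
  have hTx : ∀ x, ‖T x‖ = ‖S x‖ := by
    intro x
    show ‖e (L x)‖ = ‖S x‖
    rw [e.norm_map]
    show ‖((L x : LinearMap.range (S : X →ₗ[ℝ] G)) : G)‖ = ‖S x‖
    congr 1
  refine ⟨T, fun x => by rw [hTx]; exact h₁ x, fun y => ?_⟩
  have hy : T (T.symm y) = y := T.apply_symm_apply y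
  calc ‖T.symm y‖ ≤ C₂ * ‖S (T.symm y)‖ := h₂ _
    _ = C₂ * ‖T (T.symm y)‖ := by rw [hTx]
    _ = C₂ * ‖y‖ := by rw [hy]

end Helpers

section Iso

variable {X Y F G : Type*} [NormedAddCommGroup X] [NormedSpace ℝ X]
  [NormedAddCommGroup Y] [NormedSpace ℝ Y]
  [NormedAddCommGroup F] [NormedSpace ℝ F]

lemma toCLE_norm (e : X ≃ₗᵢ[ℝ] Y) (x : X) : ‖e.toContinuousLinearEquiv x‖ = ‖x‖ := by
  rw [show e.toContinuousLinearEquiv x = e x from rfl, e.norm_map]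

lemma toCLE_symm_norm (e : X ≃ₗᵢ[ℝ] Y) (y : Y) : ‖e.toContinuousLinearEquiv.symm y‖ = ‖y‖ := by
  conv_rhs => rw [← e.toContinuousLinearEquiv.apply_symm_apply y]
  rw [toCLE_norm]

/-- Composing with a linear isometry on the left does not change the norms product. -/
lemma norms_iso_trans (e : X ≃ₗᵢ[ℝ] Y) (T : Y ≃L[ℝ] F) :
    ‖((e.toContinuousLinearEquiv.trans T) : X →L[ℝ] F)‖ *
      ‖((e.toContinuousLinearEquiv.trans T).symm : F →L[ℝ] X)‖ =
    ‖(T : Y →L[ℝ] F)‖ * ‖(T.symm : F →L[ℝ] Y)‖ := by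
  set T' := e.toContinuousLinearEquiv.trans T with hT'
  have key : ∀ x, T' x = T (e x) := fun _ => rfl
  have key' : ∀ z, T'.symm z = e.toContinuousLinearEquiv.symm (T.symm z) := fun _ => rfl
  have h1 : ‖(T' : X →L[ℝ] F)‖ = ‖(T : Y →L[ℝ] F)‖ := by
    apply le_antisymm
    · refine ContinuousLinearMap.opNorm_le_bound _ (norm_nonneg _) fun x => ?_
      rw [show (T' : X →L[ℝ] F) x = T (e x) from rfl, ← e.norm_map x]
      exact (T : Y →L[ℝ] F).le_opNorm (e x)
    · refine ContinuousLinearMap.opNorm_le_bound _ (norm_nonneg _) fun y => ?_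
      have : (T : Y →L[ℝ] F) y = (T' : X →L[ℝ] F) (e.symm y) := by
        show T y = T (e (e.symm y)); rw [e.apply_symm_apply]
      rw [this, ← e.symm.norm_map y]
      exact (T' : X →L[ℝ] F).le_opNorm (e.symm y)
  have h2 : ‖(T'.symm : F →L[ℝ] X)‖ = ‖(T.symm : F →L[ℝ] Y)‖ := by
    apply le_antisymm
    · refine ContinuousLinearMap.opNorm_le_bound _ (norm_nonneg _) fun z => ?_
      have hz : ‖(T'.symm : F →L[ℝ] X) z‖ = ‖(T.symm : F →L[ℝ] Y) z‖ := by
        rw [show (T'.symm : F →L[ℝ] X) z = T'.symm z from rfl, key', toCLE_symm_norm]; rfl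
      rw [hz]
      exact (T.symm : F →L[ℝ] Y).le_opNorm z
    · refine ContinuousLinearMap.opNorm_le_bound _ (norm_nonneg _) fun z => ?_
      have hz : ‖(T.symm : F →L[ℝ] Y) z‖ = ‖(T'.symm : F →L[ℝ] X) z‖ := by
        rw [show (T'.symm : F →L[ℝ] X) z = T'.symm z from rfl, key', toCLE_symm_norm]; rfl
      rw [hz]
      exact (T'.symm : F →L[ℝ] X).le_opNorm z
  rw [h1, h2]

/-- Composing with a linear isometry on the right preserves pointwise bounds. -/
lemma CLE_trans_iso [NormedAddCommGroup G] [NormedSpace ℝ G] (T : X ≃L[ℝ] F) (e : F ≃ₗᵢ[ℝ] G)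
    {C₁ C₂ : ℝ}
    (h₁ : ∀ x, ‖T x‖ ≤ C₁ * ‖x‖) (h₂ : ∀ y, ‖T.symm y‖ ≤ C₂ * ‖y‖) :
    ∃ T' : X ≃L[ℝ] G, (∀ x, ‖T' x‖ ≤ C₁ * ‖x‖) ∧ (∀ y, ‖T'.symm y‖ ≤ C₂ * ‖y‖) := by
  refine ⟨T.trans e.toContinuousLinearEquiv, fun x => ?_, fun y => ?_⟩
  · rw [show (T.trans e.toContinuousLinearEquiv) x = e.toContinuousLinearEquiv (T x) from rfl,
      toCLE_norm]
    exact h₁ x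
  · rw [show (T.trans e.toContinuousLinearEquiv).symm y
        = T.symm (e.toContinuousLinearEquiv.symm y) from rfl]
    calc ‖T.symm (e.toContinuousLinearEquiv.symm y)‖
        ≤ C₂ * ‖e.toContinuousLinearEquiv.symm y‖ := h₂ _
      _ = C₂ * ‖y‖ := by rw [toCLE_symm_norm]

end Iso

section OneDim

variable {X : Type*} [NormedAddCommGroup X] [NormedSpace ℝ X]

lemma exists_CLE_one_dim (h : finrank ℝ X = 1) :
    ∃ T : X ≃L[ℝ] EuclideanSpace ℝ (Fin 1),
      ‖(T : X →L[ℝ] EuclideanSpace ℝ (Fin 1))‖ *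
        ‖(T.symm : EuclideanSpace ℝ (Fin 1) →L[ℝ] X)‖ ≤ 1 := by
  haveI : FiniteDimensional ℝ X := .of_finrank_eq_succ h
  let b : Basis (Fin 1) ℝ X := finBasisOfFinrankEq ℝ X h
  set v := b 0 with hv
  have hv0 : v ≠ 0 := b.ne_zero 0
  have hvn : (0:ℝ) < ‖v‖ := norm_pos_iff.mpr hv0
  have hxrepr : ∀ x : X, x = b.repr x 0 • v := by
    intro x
    conv_lhs => rw [← b.sum_repr x]
    rw [Fin.sum_univ_one]
  have hxnorm : ∀ x : X, ‖x‖ = |b.repr x 0| * ‖v‖ := by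
    intro x
    conv_lhs => rw [hxrepr x]
    rw [norm_smul, Real.norm_eq_abs]
  let L : X ≃ₗ[ℝ] EuclideanSpace ℝ (Fin 1) :=
    (b.equivFun).trans (WithLp.linearEquiv 2 ℝ (Fin 1 → ℝ)).symm
  let T : X ≃L[ℝ] EuclideanSpace ℝ (Fin 1) := L.toContinuousLinearEquiv
  have hTnorm : ∀ x : X, ‖T x‖ = |b.repr x 0| := by
    intro x
    rw [show T x = (WithLp.equiv 2 (Fin 1 → ℝ)).symm (b.equivFun x) from rfl,
      EuclideanSpace.norm_eq]
    simp [Fin.sum_univ_one, Basis.equivFun_apply, Real.sqrt_sq_eq_abs]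
  have calc1 : ∀ x, ‖T x‖ ≤ ‖v‖⁻¹ * ‖x‖ := by
    intro x
    rw [hTnorm x, hxnorm x]
    apply le_of_eq
    field_simp
  have calc2 : ∀ y, ‖T.symm y‖ ≤ ‖v‖ * ‖y‖ := by
    intro y
    have hy : ‖y‖ = |b.repr (T.symm y) 0| := by
      conv_lhs => rw [← T.apply_symm_apply y]
      rw [hTnorm]
    rw [hy, hxnorm (T.symm y)]
    apply le_of_eq
    ring
  refine ⟨T, le_trans (norms_le_of_bounds T (by positivity) hvn.le calc1 calc2) ?_⟩
  rw [inv_mul_cancel₀ hvn.ne']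

lemma one_dim_dBM (h : finrank ℝ X = 1) : dBM X (EuclideanSpace ℝ (Fin 1)) = 1 := by
  haveI : Nontrivial X := Module.nontrivial_of_finrank_eq_succ h
  obtain ⟨T, hT⟩ := exists_CLE_one_dim h
  apply le_antisymm
  · exact (dBM_le_norms T).trans hT
  · refine le_csInf ⟨‖(T : X →L[ℝ] EuclideanSpace ℝ (Fin 1))‖ *
        ‖(T.symm : EuclideanSpace ℝ (Fin 1) →L[ℝ] X)‖, ⟨T, rfl⟩⟩ ?_
    rintro c ⟨S, rfl⟩
    exact one_le_norms S

end OneDim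

section SumConstruct

variable {X Y E F : Type*} [NormedAddCommGroup X] [NormedSpace ℝ X]
  [NormedAddCommGroup Y] [NormedSpace ℝ Y]
  [NormedAddCommGroup E] [InnerProductSpace ℝ E]
  [NormedAddCommGroup F] [InnerProductSpace ℝ F]

lemma norm_L1 {α β : Type*} [SeminormedAddCommGroup α] [SeminormedAddCommGroup β]
    (z : WithLp 1 (α × β)) : ‖z‖ = ‖z.fst‖ + ‖z.snd‖ := by
  rw [WithLp.prod_norm_eq_add (by norm_num)]
  norm_num

lemma fst_le_L2 {α β : Type*} [SeminormedAddCommGroup α] [SeminormedAddCommGroup β]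
    (w : WithLp 2 (α × β)) : ‖w.fst‖ ≤ ‖w‖ := by
  rw [WithLp.prod_norm_eq_of_L2 w]
  calc ‖w.fst‖ = Real.sqrt (‖w.fst‖ ^ 2) := (Real.sqrt_sq (norm_nonneg _)).symm
    _ ≤ Real.sqrt (‖w.fst‖ ^ 2 + ‖w.snd‖ ^ 2) :=
        Real.sqrt_le_sqrt (by nlinarith [sq_nonneg ‖w.snd‖])

lemma snd_le_L2 {α β : Type*} [SeminormedAddCommGroup α] [SeminormedAddCommGroup β]
    (w : WithLp 2 (α × β)) : ‖w.snd‖ ≤ ‖w‖ := by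
  rw [WithLp.prod_norm_eq_of_L2 w]
  calc ‖w.snd‖ = Real.sqrt (‖w.snd‖ ^ 2) := (Real.sqrt_sq (norm_nonneg _)).symm
    _ ≤ Real.sqrt (‖w.fst‖ ^ 2 + ‖w.snd‖ ^ 2) :=
        Real.sqrt_le_sqrt (by nlinarith [sq_nonneg ‖w.fst‖])

/-- The scaled product of two continuous linear equivalences, as a linear equivalence
`WithLp p (X × Y) ≃ₗ WithLp 2 (E × F)`. -/
noncomputable def scaledProd (p : ℝ≥0∞) (T₁ : X ≃L[ℝ] E) (T₂ : Y ≃L[ℝ] F)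
    {a b : ℝ} (ha : a ≠ 0) (hb : b ≠ 0) :
    WithLp p (X × Y) ≃ₗ[ℝ] WithLp 2 (E × F) :=
  (WithLp.linearEquiv p ℝ (X × Y)).trans
    (((T₁.toLinearEquiv.trans (LinearEquiv.smulOfNeZero ℝ E a ha)).prodCongr
      (T₂.toLinearEquiv.trans (LinearEquiv.smulOfNeZero ℝ F b hb))).trans
      (WithLp.linearEquiv 2 ℝ (E × F)).symm)

lemma scaledProd_fst (p : ℝ≥0∞) (T₁ : X ≃L[ℝ] E) (T₂ : Y ≃L[ℝ] F)
    {a b : ℝ} (ha : a ≠ 0) (hb : b ≠ 0) (z : WithLp p (X × Y)) :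
    (scaledProd p T₁ T₂ ha hb z).fst = a • T₁ z.fst := rfl

lemma scaledProd_snd (p : ℝ≥0∞) (T₁ : X ≃L[ℝ] E) (T₂ : Y ≃L[ℝ] F)
    {a b : ℝ} (ha : a ≠ 0) (hb : b ≠ 0) (z : WithLp p (X × Y)) :
    (scaledProd p T₁ T₂ ha hb z).snd = b • T₂ z.snd := rfl

lemma scaledProd_symm_fst (p : ℝ≥0∞) (T₁ : X ≃L[ℝ] E) (T₂ : Y ≃L[ℝ] F)
    {a b : ℝ} (ha : a ≠ 0) (hb : b ≠ 0) (w : WithLp 2 (E × F)) :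
    ((scaledProd p T₁ T₂ ha hb).symm w).fst = T₁.symm (a⁻¹ • w.fst) := rfl

lemma scaledProd_symm_snd (p : ℝ≥0∞) (T₁ : X ≃L[ℝ] E) (T₂ : Y ≃L[ℝ] F)
    {a b : ℝ} (ha : a ≠ 0) (hb : b ≠ 0) (w : WithLp 2 (E × F)) :
    ((scaledProd p T₁ T₂ ha hb).symm w).snd = T₂.symm (b⁻¹ • w.snd) := rfl

end SumConstruct

section Pos

variable {X F : Type*} [NormedAddCommGroup X] [NormedSpace ℝ X]
  [NormedAddCommGroup F] [NormedSpace ℝ F]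

lemma CLE_norm_pos [Nontrivial X] (T : X ≃L[ℝ] F) : 0 < ‖(T : X →L[ℝ] F)‖ := by
  obtain ⟨x₀, hx₀⟩ := exists_ne (0 : X)
  have hTx : T x₀ ≠ 0 := fun hc => hx₀ (by simpa using congrArg T.symm hc)
  have h1 : 0 < ‖T x₀‖ := norm_pos_iff.mpr hTx
  have h2 : ‖T x₀‖ ≤ ‖(T : X →L[ℝ] F)‖ * ‖x₀‖ := (T : X →L[ℝ] F).le_opNorm x₀
  by_contra h
  push_neg at h
  nlinarith [norm_nonneg x₀]

lemma CLE_symm_norm_pos [Nontrivial X] (T : X ≃L[ℝ] F) : 0 < ‖(T.symm : F →L[ℝ] X)‖ := by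
  obtain ⟨x₀, hx₀⟩ := exists_ne (0 : X)
  have h1 : 0 < ‖x₀‖ := norm_pos_iff.mpr hx₀
  have h2 : ‖x₀‖ ≤ ‖(T.symm : F →L[ℝ] X)‖ * ‖T x₀‖ := by
    conv_lhs => rw [← T.symm_apply_apply x₀]
    exact (T.symm : F →L[ℝ] X).le_opNorm _
  by_contra h
  push_neg at h
  nlinarith [norm_nonneg (T x₀)]

end Pos

section SumUpper

variable {X Y E F : Type*} [NormedAddCommGroup X] [NormedSpace ℝ X]
  [NormedAddCommGroup Y] [NormedSpace ℝ Y]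
  [NormedAddCommGroup E] [InnerProductSpace ℝ E]
  [NormedAddCommGroup F] [InnerProductSpace ℝ F]
  [FiniteDimensional ℝ X] [FiniteDimensional ℝ Y]
  [FiniteDimensional ℝ E] [FiniteDimensional ℝ F]

lemma sum_top_upper [Nontrivial X] [Nontrivial Y] (T₁ : X ≃L[ℝ] E) (T₂ : Y ≃L[ℝ] F) :
    ∃ T : WithLp ∞ (X × Y) ≃L[ℝ] WithLp 2 (E × F),
      (∀ z, ‖T z‖ ≤ Real.sqrt ((‖(T₁ : X →L[ℝ] E)‖ * ‖(T₁.symm : E →L[ℝ] X)‖) ^ 2 +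
          (‖(T₂ : Y →L[ℝ] F)‖ * ‖(T₂.symm : F →L[ℝ] Y)‖) ^ 2) * ‖z‖) ∧
      (∀ w, ‖T.symm w‖ ≤ 1 * ‖w‖) := by
  haveI : FiniteDimensional ℝ (WithLp ∞ (X × Y)) :=
    Module.Finite.equiv (WithLp.linearEquiv ∞ ℝ (X × Y)).symm
  set n₁ := ‖(T₁ : X →L[ℝ] E)‖ with hn₁def
  set n₂ := ‖(T₂ : Y →L[ℝ] F)‖ with hn₂def
  set a := ‖(T₁.symm : E →L[ℝ] X)‖ with hadef
  set b := ‖(T₂.symm : F →L[ℝ] Y)‖ with hbdef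
  have ha : 0 < a := CLE_symm_norm_pos T₁
  have hb : 0 < b := CLE_symm_norm_pos T₂
  have hn₁ : 0 < n₁ := CLE_norm_pos T₁
  have hn₂ : 0 < n₂ := CLE_norm_pos T₂
  set c₁ := n₁ * a with hc₁def
  set c₂ := n₂ * b with hc₂def
  have hc₁ : 0 < c₁ := mul_pos hn₁ ha
  have hc₂ : 0 < c₂ := mul_pos hn₂ hb
  refine ⟨(scaledProd ∞ T₁ T₂ ha.ne' hb.ne').toContinuousLinearEquiv, fun z => ?_, fun w => ?_⟩
  · -- upper bound for the forward map
    set u := (scaledProd ∞ T₁ T₂ ha.ne' hb.ne').toContinuousLinearEquiv z with hudef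
    have hu : u = scaledProd ∞ T₁ T₂ ha.ne' hb.ne' z := rfl
    have hz : ‖z‖ = ‖z.fst‖ ⊔ ‖z.snd‖ := WithLp.prod_norm_eq_sup z
    have hfle : ‖z.fst‖ ≤ ‖z‖ := by rw [hz]; exact le_sup_left
    have hsle : ‖z.snd‖ ≤ ‖z‖ := by rw [hz]; exact le_sup_right
    have h1 : ‖u.fst‖ ≤ c₁ * ‖z‖ := by
      rw [hu, scaledProd_fst, norm_smul, Real.norm_eq_abs, abs_of_pos ha]
      calc a * ‖T₁ z.fst‖ ≤ a * (n₁ * ‖z.fst‖) :=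
            mul_le_mul_of_nonneg_left ((T₁ : X →L[ℝ] E).le_opNorm z.fst) ha.le
        _ ≤ a * (n₁ * ‖z‖) := by nlinarith
        _ = c₁ * ‖z‖ := by rw [hc₁def]; ring
    have h2 : ‖u.snd‖ ≤ c₂ * ‖z‖ := by
      rw [hu, scaledProd_snd, norm_smul, Real.norm_eq_abs, abs_of_pos hb]
      calc b * ‖T₂ z.snd‖ ≤ b * (n₂ * ‖z.snd‖) :=
            mul_le_mul_of_nonneg_left ((T₂ : Y →L[ℝ] F).le_opNorm z.snd) hb.le
        _ ≤ b * (n₂ * ‖z‖) := by nlinarith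
        _ = c₂ * ‖z‖ := by rw [hc₂def]; ring
    have hsq1 : ‖u.fst‖ ^ 2 ≤ (c₁ * ‖z‖) ^ 2 := by nlinarith [norm_nonneg u.fst]
    have hsq2 : ‖u.snd‖ ^ 2 ≤ (c₂ * ‖z‖) ^ 2 := by nlinarith [norm_nonneg u.snd]
    calc ‖u‖ = Real.sqrt (‖u.fst‖ ^ 2 + ‖u.snd‖ ^ 2) := WithLp.prod_norm_eq_of_L2 u
      _ ≤ Real.sqrt ((c₁ ^ 2 + c₂ ^ 2) * ‖z‖ ^ 2) := Real.sqrt_le_sqrt (by nlinarith)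
      _ = Real.sqrt (c₁ ^ 2 + c₂ ^ 2) * ‖z‖ := by
          rw [Real.sqrt_mul (by positivity), Real.sqrt_sq (norm_nonneg _)]
  · -- bound for the inverse map
    set v := (scaledProd ∞ T₁ T₂ ha.ne' hb.ne').toContinuousLinearEquiv.symm w with hvdef
    have hv : v = (scaledProd ∞ T₁ T₂ ha.ne' hb.ne').symm w := rfl
    have hf : ‖v.fst‖ ≤ ‖w‖ := by
      rw [hv, scaledProd_symm_fst]
      calc ‖T₁.symm (a⁻¹ • w.fst)‖ ≤ a * ‖a⁻¹ • w.fst‖ :=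
            (T₁.symm : E →L[ℝ] X).le_opNorm _
        _ = ‖w.fst‖ := by
            rw [norm_smul, Real.norm_eq_abs, abs_of_pos (inv_pos.mpr ha)]
            field_simp
        _ ≤ ‖w‖ := fst_le_L2 w
    have hs : ‖v.snd‖ ≤ ‖w‖ := by
      rw [hv, scaledProd_symm_snd]
      calc ‖T₂.symm (b⁻¹ • w.snd)‖ ≤ b * ‖b⁻¹ • w.snd‖ :=
            (T₂.symm : F →L[ℝ] Y).le_opNorm _
        _ = ‖w.snd‖ := by
            rw [norm_smul, Real.norm_eq_abs, abs_of_pos (inv_pos.mpr hb)]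
            field_simp
        _ ≤ ‖w‖ := snd_le_L2 w
    rw [show ‖v‖ = ‖v.fst‖ ⊔ ‖v.snd‖ from WithLp.prod_norm_eq_sup v, one_mul]
    exact sup_le hf hs

lemma sum_one_upper [Nontrivial X] [Nontrivial Y] (T₁ : X ≃L[ℝ] E) (T₂ : Y ≃L[ℝ] F) :
    ∃ T : WithLp 1 (X × Y) ≃L[ℝ] WithLp 2 (E × F),
      (∀ z, ‖T z‖ ≤ 1 * ‖z‖) ∧
      (∀ w, ‖T.symm w‖ ≤ Real.sqrt ((‖(T₁ : X →L[ℝ] E)‖ * ‖(T₁.symm : E →L[ℝ] X)‖) ^ 2 +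
          (‖(T₂ : Y →L[ℝ] F)‖ * ‖(T₂.symm : F →L[ℝ] Y)‖) ^ 2) * ‖w‖) := by
  haveI : FiniteDimensional ℝ (WithLp 1 (X × Y)) :=
    Module.Finite.equiv (WithLp.linearEquiv 1 ℝ (X × Y)).symm
  set n₁ := ‖(T₁ : X →L[ℝ] E)‖ with hn₁def
  set n₂ := ‖(T₂ : Y →L[ℝ] F)‖ with hn₂def
  set a' := ‖(T₁.symm : E →L[ℝ] X)‖ with hadef
  set b' := ‖(T₂.symm : F →L[ℝ] Y)‖ with hbdef
  have ha' : 0 < a' := CLE_symm_norm_pos T₁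
  have hb' : 0 < b' := CLE_symm_norm_pos T₂
  have hn₁ : 0 < n₁ := CLE_norm_pos T₁
  have hn₂ : 0 < n₂ := CLE_norm_pos T₂
  have hn₁' : (n₁ : ℝ)⁻¹ ≠ 0 := by positivity
  have hn₂' : (n₂ : ℝ)⁻¹ ≠ 0 := by positivity
  set c₁ := n₁ * a' with hc₁def
  set c₂ := n₂ * b' with hc₂def
  refine ⟨(scaledProd 1 T₁ T₂ hn₁' hn₂').toContinuousLinearEquiv, fun z => ?_, fun w => ?_⟩
  · set u := (scaledProd 1 T₁ T₂ hn₁' hn₂').toContinuousLinearEquiv z with hudef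
    have hu : u = scaledProd 1 T₁ T₂ hn₁' hn₂' z := rfl
    have hz : ‖z‖ = ‖z.fst‖ + ‖z.snd‖ := norm_L1 z
    have h1 : ‖u.fst‖ ≤ ‖z.fst‖ := by
      rw [hu, scaledProd_fst, norm_smul, Real.norm_eq_abs, abs_of_pos (inv_pos.mpr hn₁)]
      rw [inv_mul_le_iff₀ hn₁]
      exact (T₁ : X →L[ℝ] E).le_opNorm z.fst
    have h2 : ‖u.snd‖ ≤ ‖z.snd‖ := by
      rw [hu, scaledProd_snd, norm_smul, Real.norm_eq_abs, abs_of_pos (inv_pos.mpr hn₂)]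
      rw [inv_mul_le_iff₀ hn₂]
      exact (T₂ : Y →L[ℝ] F).le_opNorm z.snd
    calc ‖u‖ = Real.sqrt (‖u.fst‖ ^ 2 + ‖u.snd‖ ^ 2) := WithLp.prod_norm_eq_of_L2 u
      _ ≤ Real.sqrt ((‖z.fst‖ + ‖z.snd‖) ^ 2) := by
          apply Real.sqrt_le_sqrt
          nlinarith [norm_nonneg u.fst, norm_nonneg u.snd, norm_nonneg z.fst, norm_nonneg z.snd,
            mul_nonneg (norm_nonneg z.fst) (norm_nonneg z.snd)]
      _ = ‖z.fst‖ + ‖z.snd‖ := Real.sqrt_sq (by positivity)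
      _ = 1 * ‖z‖ := by rw [hz, one_mul]
  · set v := (scaledProd 1 T₁ T₂ hn₁' hn₂').toContinuousLinearEquiv.symm w with hvdef
    have hv : v = (scaledProd 1 T₁ T₂ hn₁' hn₂').symm w := rfl
    have hf : ‖v.fst‖ ≤ c₁ * ‖w.fst‖ := by
      rw [hv, scaledProd_symm_fst]
      calc ‖T₁.symm ((n₁⁻¹)⁻¹ • w.fst)‖ ≤ a' * ‖(n₁⁻¹)⁻¹ • w.fst‖ :=
            (T₁.symm : E →L[ℝ] X).le_opNorm _
        _ = c₁ * ‖w.fst‖ := by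
            rw [inv_inv, norm_smul, Real.norm_eq_abs, abs_of_pos hn₁, hc₁def]
            ring
    have hs : ‖v.snd‖ ≤ c₂ * ‖w.snd‖ := by
      rw [hv, scaledProd_symm_snd]
      calc ‖T₂.symm ((n₂⁻¹)⁻¹ • w.snd)‖ ≤ b' * ‖(n₂⁻¹)⁻¹ • w.snd‖ :=
            (T₂.symm : F →L[ℝ] Y).le_opNorm _
        _ = c₂ * ‖w.snd‖ := by
            rw [inv_inv, norm_smul, Real.norm_eq_abs, abs_of_pos hn₂, hc₂def]
            ring
    have hw : ‖w‖ = Real.sqrt (‖w.fst‖ ^ 2 + ‖w.snd‖ ^ 2) := WithLp.prod_norm_eq_of_L2 w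
    have hc₁0 : 0 ≤ c₁ := by positivity
    have hc₂0 : 0 ≤ c₂ := by positivity
    have cs : c₁ * ‖w.fst‖ + c₂ * ‖w.snd‖ ≤
        Real.sqrt (c₁ ^ 2 + c₂ ^ 2) * Real.sqrt (‖w.fst‖ ^ 2 + ‖w.snd‖ ^ 2) := by
      have hsq : (c₁ * ‖w.fst‖ + c₂ * ‖w.snd‖) ^ 2 ≤
          (c₁ ^ 2 + c₂ ^ 2) * (‖w.fst‖ ^ 2 + ‖w.snd‖ ^ 2) := by
        nlinarith [sq_nonneg (c₁ * ‖w.snd‖ - c₂ * ‖w.fst‖)]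
      calc c₁ * ‖w.fst‖ + c₂ * ‖w.snd‖
          = Real.sqrt ((c₁ * ‖w.fst‖ + c₂ * ‖w.snd‖) ^ 2) :=
            (Real.sqrt_sq (by positivity)).symm
        _ ≤ Real.sqrt ((c₁ ^ 2 + c₂ ^ 2) * (‖w.fst‖ ^ 2 + ‖w.snd‖ ^ 2)) :=
            Real.sqrt_le_sqrt hsq
        _ = Real.sqrt (c₁ ^ 2 + c₂ ^ 2) * Real.sqrt (‖w.fst‖ ^ 2 + ‖w.snd‖ ^ 2) :=
            Real.sqrt_mul (by positivity) _
    calc ‖v‖ = ‖v.fst‖ + ‖v.snd‖ := norm_L1 v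
      _ ≤ c₁ * ‖w.fst‖ + c₂ * ‖w.snd‖ := add_le_add hf hs
      _ ≤ Real.sqrt (c₁ ^ 2 + c₂ ^ 2) * Real.sqrt (‖w.fst‖ ^ 2 + ‖w.snd‖ ^ 2) := cs
      _ = Real.sqrt (c₁ ^ 2 + c₂ ^ 2) * ‖w‖ := by rw [← hw]

end SumUpper

section SumLower

variable {X Y G : Type*} [NormedAddCommGroup X] [NormedSpace ℝ X]
  [NormedAddCommGroup Y] [NormedSpace ℝ Y]
  [NormedAddCommGroup G] [InnerProductSpace ℝ G] [FiniteDimensional ℝ G]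
  [FiniteDimensional ℝ X] [FiniteDimensional ℝ Y]

/-- The embedding `x ↦ (x, 0)` into an `L^p` product. -/
def embX (p : ℝ≥0∞) : X →ₗ[ℝ] WithLp p (X × Y) :=
  ((WithLp.linearEquiv p ℝ (X × Y)).symm.toLinearMap).comp (LinearMap.inl ℝ X Y)

/-- The embedding `y ↦ (0, y)` into an `L^p` product. -/
def embY (p : ℝ≥0∞) : Y →ₗ[ℝ] WithLp p (X × Y) :=
  ((WithLp.linearEquiv p ℝ (X × Y)).symm.toLinearMap).comp (LinearMap.inr ℝ X Y)

lemma embX_fst (p : ℝ≥0∞) (x : X) : ((embX p x : WithLp p (X × Y))).fst = x := rfl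
lemma embX_snd (p : ℝ≥0∞) (x : X) : ((embX p x : WithLp p (X × Y))).snd = (0 : Y) := rfl
lemma embY_fst (p : ℝ≥0∞) (y : Y) : ((embY p y : WithLp p (X × Y))).fst = (0 : X) := rfl
lemma embY_snd (p : ℝ≥0∞) (y : Y) : ((embY p y : WithLp p (X × Y))).snd = y := rfl

lemma pair_fst (p : ℝ≥0∞) (x : X) (y : Y) :
    ((embX p x + embY p y : WithLp p (X × Y))).fst = x := by
  rw [WithLp.add_fst, embX_fst, embY_fst, add_zero]

lemma pair_snd (p : ℝ≥0∞) (x : X) (y : Y) :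
    ((embX p x + embY p y : WithLp p (X × Y))).snd = y := by
  rw [WithLp.add_snd, embX_snd, embY_snd, zero_add]

lemma top_pair_norm (x : X) (y : Y) :
    ‖(embX ∞ x + embY ∞ y : WithLp ∞ (X × Y))‖ = ‖x‖ ⊔ ‖y‖ := by
  rw [WithLp.prod_norm_eq_sup, pair_fst, pair_snd]

lemma one_pair_norm (x : X) (y : Y) :
    ‖(embX 1 x + embY 1 y : WithLp 1 (X × Y))‖ = ‖x‖ + ‖y‖ := by
  rw [norm_L1, pair_fst, pair_snd]

lemma embX_norm_top (x : X) : ‖(embX ∞ x : WithLp ∞ (X × Y))‖ = ‖x‖ := by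
  rw [WithLp.prod_norm_eq_sup, embX_fst, embX_snd, norm_zero, sup_of_le_left (norm_nonneg x)]

lemma embY_norm_top (y : Y) : ‖(embY ∞ y : WithLp ∞ (X × Y))‖ = ‖y‖ := by
  rw [WithLp.prod_norm_eq_sup, embY_fst, embY_snd, norm_zero, sup_of_le_right (norm_nonneg y)]

lemma embX_norm_one (x : X) : ‖(embX 1 x : WithLp 1 (X × Y))‖ = ‖x‖ := by
  rw [norm_L1, embX_fst, embX_snd, norm_zero, add_zero]

lemma embY_norm_one (y : Y) : ‖(embY 1 y : WithLp 1 (X × Y))‖ = ‖y‖ := by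
  rw [norm_L1, embY_fst, embY_snd, norm_zero, zero_add]

end SumLower

section LowerTop

variable {X Y G : Type*} [NormedAddCommGroup X] [NormedSpace ℝ X]
  [NormedAddCommGroup Y] [NormedSpace ℝ Y]
  [NormedAddCommGroup G] [InnerProductSpace ℝ G] [FiniteDimensional ℝ G]
  [FiniteDimensional ℝ X] [FiniteDimensional ℝ Y]

lemma sum_top_lower (hm : 0 < finrank ℝ X) (hk : 0 < finrank ℝ Y)
    (IHX : dBM X (EuclideanSpace ℝ (Fin (finrank ℝ X))) = Real.sqrt (finrank ℝ X))
    (IHY : dBM Y (EuclideanSpace ℝ (Fin (finrank ℝ Y))) = Real.sqrt (finrank ℝ Y))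
    (T : WithLp ∞ (X × Y) ≃L[ℝ] G) :
    Real.sqrt ((finrank ℝ X : ℝ) + (finrank ℝ Y : ℝ)) ≤
      ‖(T : WithLp ∞ (X × Y) →L[ℝ] G)‖ * ‖(T.symm : G →L[ℝ] WithLp ∞ (X × Y))‖ := by
  haveI : Nontrivial X := Module.nontrivial_of_finrank_pos hm
  haveI : Nontrivial Y := Module.nontrivial_of_finrank_pos hk
  set nT := ‖(T : WithLp ∞ (X × Y) →L[ℝ] G)‖ with hnT
  set nS := ‖(T.symm : G →L[ℝ] WithLp ∞ (X × Y))‖ with hnS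
  have hnS0 : 0 ≤ nS := norm_nonneg _
  have hnT0 : 0 ≤ nT := norm_nonneg _
  -- the two restrictions
  let S₁ : X →L[ℝ] G := (T : WithLp ∞ (X × Y) →L[ℝ] G).comp
    (LinearMap.toContinuousLinearMap (embX ∞))
  let S₂ : Y →L[ℝ] G := (T : WithLp ∞ (X × Y) →L[ℝ] G).comp
    (LinearMap.toContinuousLinearMap (embY ∞))
  have hS₁app : ∀ x : X, S₁ x = T (embX ∞ x) := fun _ => rfl
  have hS₂app : ∀ y : Y, S₂ y = T (embY ∞ y) := fun _ => rfl
  have hS₁up : ∀ x : X, ‖S₁ x‖ ≤ nT * ‖x‖ := by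
    intro x
    rw [hS₁app]
    calc ‖T (embX ∞ x)‖ ≤ nT * ‖(embX ∞ x : WithLp ∞ (X × Y))‖ :=
          (T : WithLp ∞ (X × Y) →L[ℝ] G).le_opNorm _
      _ = nT * ‖x‖ := by rw [embX_norm_top]
  have hS₂up : ∀ y : Y, ‖S₂ y‖ ≤ nT * ‖y‖ := by
    intro y
    rw [hS₂app]
    calc ‖T (embY ∞ y)‖ ≤ nT * ‖(embY ∞ y : WithLp ∞ (X × Y))‖ :=
          (T : WithLp ∞ (X × Y) →L[ℝ] G).le_opNorm _
      _ = nT * ‖y‖ := by rw [embY_norm_top]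
  have hS₁lo : ∀ x : X, ‖x‖ ≤ nS * ‖S₁ x‖ := by
    intro x
    rw [hS₁app]
    calc ‖x‖ = ‖(embX ∞ x : WithLp ∞ (X × Y))‖ := (embX_norm_top x).symm
      _ = ‖T.symm (T (embX ∞ x))‖ := by rw [T.symm_apply_apply]
      _ ≤ nS * ‖T (embX ∞ x)‖ := (T.symm : G →L[ℝ] WithLp ∞ (X × Y)).le_opNorm _
  have hS₂lo : ∀ y : Y, ‖y‖ ≤ nS * ‖S₂ y‖ := by
    intro y
    rw [hS₂app]
    calc ‖y‖ = ‖(embY ∞ y : WithLp ∞ (X × Y))‖ := (embY_norm_top y).symm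
      _ = ‖T.symm (T (embY ∞ y))‖ := by rw [T.symm_apply_apply]
      _ ≤ nS * ‖T (embY ∞ y)‖ := (T.symm : G →L[ℝ] WithLp ∞ (X × Y)).le_opNorm _
  have hS₁inj : Function.Injective S₁ := by
    intro x x' h
    rw [hS₁app, hS₁app] at h
    have h2 := T.injective h
    have := congrArg WithLp.fst h2
    rwa [embX_fst, embX_fst] at this
  have hS₂inj : Function.Injective S₂ := by
    intro y y' h
    rw [hS₂app, hS₂app] at h
    have h2 := T.injective h
    have := congrArg WithLp.snd h2
    rwa [embY_snd, embY_snd] at this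
  -- key parallelogram inequality
  have key : ∀ (x : X) (y : Y), ‖S₁ x‖ ^ 2 + ‖S₂ y‖ ^ 2 ≤ nT ^ 2 * (‖x‖ ⊔ ‖y‖) ^ 2 := by
    intro x y
    have hsum : S₁ x + S₂ y = T (embX ∞ x + embY ∞ y) := by
      rw [hS₁app, hS₂app, map_add]
    have hdiff : S₁ x - S₂ y = T (embX ∞ x - embY ∞ y) := by
      rw [hS₁app, hS₂app, map_sub]
    have hb1 : ‖S₁ x + S₂ y‖ ≤ nT * (‖x‖ ⊔ ‖y‖) := by
      rw [hsum]
      calc ‖T (embX ∞ x + embY ∞ y)‖ ≤ nT * ‖(embX ∞ x + embY ∞ y : WithLp ∞ (X × Y))‖ :=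
            (T : WithLp ∞ (X × Y) →L[ℝ] G).le_opNorm _
        _ = nT * (‖x‖ ⊔ ‖y‖) := by rw [top_pair_norm]
    have hb2 : ‖S₁ x - S₂ y‖ ≤ nT * (‖x‖ ⊔ ‖y‖) := by
      rw [hdiff, sub_eq_add_neg, ← map_neg (embY ∞)]
      calc ‖T (embX ∞ x + embY ∞ (-y))‖
          ≤ nT * ‖(embX ∞ x + embY ∞ (-y) : WithLp ∞ (X × Y))‖ :=
            (T : WithLp ∞ (X × Y) →L[ℝ] G).le_opNorm _
        _ = nT * (‖x‖ ⊔ ‖y‖) := by rw [top_pair_norm, norm_neg]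
    have par := parallelogram_law_with_norm ℝ (S₁ x) (S₂ y)
    have hb1' : ‖S₁ x + S₂ y‖ ^ 2 ≤ (nT * (‖x‖ ⊔ ‖y‖)) ^ 2 :=
      pow_le_pow_left₀ (norm_nonneg _) hb1 2
    have hb2' : ‖S₁ x - S₂ y‖ ^ 2 ≤ (nT * (‖x‖ ⊔ ‖y‖)) ^ 2 :=
      pow_le_pow_left₀ (norm_nonneg _) hb2 2
    nlinarith [par, hb1', hb2']
  -- attain the maxima on the unit spheres
  obtain ⟨x₀, hx₀s, hx₀max⟩ := (isCompact_sphere (0 : X) 1).exists_isMaxOn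
    (NormedSpace.sphere_nonempty.mpr zero_le_one)
    ((S₁.continuous.norm).continuousOn)
  obtain ⟨y₀, hy₀s, hy₀max⟩ := (isCompact_sphere (0 : Y) 1).exists_isMaxOn
    (NormedSpace.sphere_nonempty.mpr zero_le_one)
    ((S₂.continuous.norm).continuousOn)
  have hx₀1 : ‖x₀‖ = 1 := mem_sphere_zero_iff_norm.mp hx₀s
  have hy₀1 : ‖y₀‖ = 1 := mem_sphere_zero_iff_norm.mp hy₀s
  set A := ‖S₁ x₀‖ with hA
  set B := ‖S₂ y₀‖ with hB
  have hA0 : 0 ≤ A := norm_nonneg _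
  have hB0 : 0 ≤ B := norm_nonneg _
  have hAbound : ∀ x : X, ‖S₁ x‖ ≤ A * ‖x‖ := by
    intro x
    rcases eq_or_ne x 0 with rfl | hx
    · simp
    · have hxn : 0 < ‖x‖ := norm_pos_iff.mpr hx
      have hu : ‖x‖⁻¹ • x ∈ sphere (0 : X) 1 := by
        rw [mem_sphere_zero_iff_norm, norm_smul, Real.norm_eq_abs, abs_of_pos (inv_pos.mpr hxn),
          inv_mul_cancel₀ hxn.ne']
      have hle := hx₀max hu
      simp only [Set.mem_setOf_eq, map_smul, norm_smul, Real.norm_eq_abs,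
        abs_of_pos (inv_pos.mpr hxn)] at hle
      calc ‖S₁ x‖ = ‖x‖ * (‖x‖⁻¹ * ‖S₁ x‖) := by field_simp
        _ ≤ ‖x‖ * A := mul_le_mul_of_nonneg_left hle (norm_nonneg x)
        _ = A * ‖x‖ := mul_comm _ _
  have hBbound : ∀ y : Y, ‖S₂ y‖ ≤ B * ‖y‖ := by
    intro y
    rcases eq_or_ne y 0 with rfl | hy
    · simp
    · have hyn : 0 < ‖y‖ := norm_pos_iff.mpr hy
      have hu : ‖y‖⁻¹ • y ∈ sphere (0 : Y) 1 := by
        rw [mem_sphere_zero_iff_norm, norm_smul, Real.norm_eq_abs, abs_of_pos (inv_pos.mpr hyn),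
          inv_mul_cancel₀ hyn.ne']
      have hle := hy₀max hu
      simp only [Set.mem_setOf_eq, map_smul, norm_smul, Real.norm_eq_abs,
        abs_of_pos (inv_pos.mpr hyn)] at hle
      calc ‖S₂ y‖ = ‖y‖ * (‖y‖⁻¹ * ‖S₂ y‖) := by field_simp
        _ ≤ ‖y‖ * B := mul_le_mul_of_nonneg_left hle (norm_nonneg y)
        _ = B * ‖y‖ := mul_comm _ _
  -- distance bounds for the pieces
  have dX_le : Real.sqrt (finrank ℝ X) ≤ A * nS := by
    obtain ⟨T', hT1, hT2⟩ := exists_CLE_of_inj S₁ hS₁inj hAbound hS₁lo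
    calc Real.sqrt (finrank ℝ X) = dBM X (EuclideanSpace ℝ (Fin (finrank ℝ X))) := IHX.symm
      _ ≤ ‖(T' : X →L[ℝ] EuclideanSpace ℝ (Fin (finrank ℝ X)))‖ *
          ‖(T'.symm : EuclideanSpace ℝ (Fin (finrank ℝ X)) →L[ℝ] X)‖ := dBM_le_norms T'
      _ ≤ A * nS := norms_le_of_bounds T' hA0 hnS0 hT1 hT2
  have dY_le : Real.sqrt (finrank ℝ Y) ≤ B * nS := by
    obtain ⟨T', hT1, hT2⟩ := exists_CLE_of_inj S₂ hS₂inj hBbound hS₂lo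
    calc Real.sqrt (finrank ℝ Y) = dBM Y (EuclideanSpace ℝ (Fin (finrank ℝ Y))) := IHY.symm
      _ ≤ ‖(T' : Y →L[ℝ] EuclideanSpace ℝ (Fin (finrank ℝ Y)))‖ *
          ‖(T'.symm : EuclideanSpace ℝ (Fin (finrank ℝ Y)) →L[ℝ] Y)‖ := dBM_le_norms T'
      _ ≤ B * nS := norms_le_of_bounds T' hB0 hnS0 hT1 hT2
  -- A² + B² ≤ nT²
  have hAB : A ^ 2 + B ^ 2 ≤ nT ^ 2 := by
    have hk := key x₀ y₀
    rw [hx₀1, hy₀1] at hk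
    simpa using hk
  -- put everything together
  have h1 : (finrank ℝ X : ℝ) ≤ (A * nS) ^ 2 := by
    have hs := Real.sq_sqrt (by positivity : (0 : ℝ) ≤ (finrank ℝ X : ℝ))
    nlinarith [Real.sqrt_nonneg ((finrank ℝ X : ℝ))]
  have h2 : (finrank ℝ Y : ℝ) ≤ (B * nS) ^ 2 := by
    have hs := Real.sq_sqrt (by positivity : (0 : ℝ) ≤ (finrank ℝ Y : ℝ))
    nlinarith [Real.sqrt_nonneg ((finrank ℝ Y : ℝ))]
  have hsum : (finrank ℝ X : ℝ) + (finrank ℝ Y : ℝ) ≤ (nT * nS) ^ 2 := by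
    nlinarith [sq_nonneg nS]
  calc Real.sqrt ((finrank ℝ X : ℝ) + (finrank ℝ Y : ℝ))
      ≤ Real.sqrt ((nT * nS) ^ 2) := Real.sqrt_le_sqrt hsum
    _ = nT * nS := Real.sqrt_sq (by positivity)

end LowerTop

section LowerOne

variable {X Y G : Type*} [NormedAddCommGroup X] [NormedSpace ℝ X]
  [NormedAddCommGroup Y] [NormedSpace ℝ Y]
  [NormedAddCommGroup G] [InnerProductSpace ℝ G] [FiniteDimensional ℝ G]
  [FiniteDimensional ℝ X] [FiniteDimensional ℝ Y]

lemma sum_one_lower (hm : 0 < finrank ℝ X) (hk : 0 < finrank ℝ Y)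
    (IHX : dBM X (EuclideanSpace ℝ (Fin (finrank ℝ X))) = Real.sqrt (finrank ℝ X))
    (IHY : dBM Y (EuclideanSpace ℝ (Fin (finrank ℝ Y))) = Real.sqrt (finrank ℝ Y))
    (T : WithLp 1 (X × Y) ≃L[ℝ] G) :
    Real.sqrt ((finrank ℝ X : ℝ) + (finrank ℝ Y : ℝ)) ≤
      ‖(T : WithLp 1 (X × Y) →L[ℝ] G)‖ * ‖(T.symm : G →L[ℝ] WithLp 1 (X × Y))‖ := by
  haveI : Nontrivial X := Module.nontrivial_of_finrank_pos hm
  haveI : Nontrivial Y := Module.nontrivial_of_finrank_pos hk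
  set nT := ‖(T : WithLp 1 (X × Y) →L[ℝ] G)‖ with hnT
  set nS := ‖(T.symm : G →L[ℝ] WithLp 1 (X × Y))‖ with hnS
  have hnS0 : 0 ≤ nS := norm_nonneg _
  have hnT0 : 0 ≤ nT := norm_nonneg _
  let S₁ : X →L[ℝ] G := (T : WithLp 1 (X × Y) →L[ℝ] G).comp
    (LinearMap.toContinuousLinearMap (embX 1))
  let S₂ : Y →L[ℝ] G := (T : WithLp 1 (X × Y) →L[ℝ] G).comp
    (LinearMap.toContinuousLinearMap (embY 1))
  have hS₁app : ∀ x : X, S₁ x = T (embX 1 x) := fun _ => rfl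
  have hS₂app : ∀ y : Y, S₂ y = T (embY 1 y) := fun _ => rfl
  have hS₁up : ∀ x : X, ‖S₁ x‖ ≤ nT * ‖x‖ := by
    intro x
    rw [hS₁app]
    calc ‖T (embX 1 x)‖ ≤ nT * ‖(embX 1 x : WithLp 1 (X × Y))‖ :=
          (T : WithLp 1 (X × Y) →L[ℝ] G).le_opNorm _
      _ = nT * ‖x‖ := by rw [embX_norm_one]
  have hS₂up : ∀ y : Y, ‖S₂ y‖ ≤ nT * ‖y‖ := by
    intro y
    rw [hS₂app]
    calc ‖T (embY 1 y)‖ ≤ nT * ‖(embY 1 y : WithLp 1 (X × Y))‖ :=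
          (T : WithLp 1 (X × Y) →L[ℝ] G).le_opNorm _
      _ = nT * ‖y‖ := by rw [embY_norm_one]
  have hS₁inj : Function.Injective S₁ := by
    intro x x' h
    rw [hS₁app, hS₁app] at h
    have h2 := T.injective h
    have := congrArg WithLp.fst h2
    rwa [embX_fst, embX_fst] at this
  have hS₂inj : Function.Injective S₂ := by
    intro y y' h
    rw [hS₂app, hS₂app] at h
    have h2 := T.injective h
    have := congrArg WithLp.snd h2
    rwa [embY_snd, embY_snd] at this
  -- key parallelogram inequality
  have key : ∀ (x : X) (y : Y),
      (‖x‖ + ‖y‖) ^ 2 ≤ nS ^ 2 * (‖S₁ x‖ ^ 2 + ‖S₂ y‖ ^ 2) := by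
    intro x y
    have hsum : S₁ x + S₂ y = T (embX 1 x + embY 1 y) := by
      rw [hS₁app, hS₂app, map_add]
    have hdiff : S₁ x - S₂ y = T (embX 1 x + embY 1 (-y)) := by
      rw [hS₁app, hS₂app, map_add, map_neg (embY 1), map_neg, sub_eq_add_neg]
    have hlo : ∀ z : WithLp 1 (X × Y), ‖z‖ ≤ nS * ‖T z‖ := by
      intro z
      conv_lhs => rw [← T.symm_apply_apply z]
      exact (T.symm : G →L[ℝ] WithLp 1 (X × Y)).le_opNorm _
    have hb1 : ‖x‖ + ‖y‖ ≤ nS * ‖S₁ x + S₂ y‖ := by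
      rw [hsum, ← one_pair_norm x y]
      exact hlo _
    have hb2 : ‖x‖ + ‖y‖ ≤ nS * ‖S₁ x - S₂ y‖ := by
      rw [hdiff]
      calc ‖x‖ + ‖y‖ = ‖x‖ + ‖-y‖ := by rw [norm_neg]
        _ = ‖(embX 1 x + embY 1 (-y) : WithLp 1 (X × Y))‖ := (one_pair_norm x (-y)).symm
        _ ≤ nS * ‖T (embX 1 x + embY 1 (-y))‖ := hlo _
    have par := parallelogram_law_with_norm ℝ (S₁ x) (S₂ y)
    have h0 : 0 ≤ ‖x‖ + ‖y‖ := by positivity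
    have hb1' : (‖x‖ + ‖y‖) ^ 2 ≤ (nS * ‖S₁ x + S₂ y‖) ^ 2 := pow_le_pow_left₀ h0 hb1 2
    have hb2' : (‖x‖ + ‖y‖) ^ 2 ≤ (nS * ‖S₁ x - S₂ y‖) ^ 2 := pow_le_pow_left₀ h0 hb2 2
    nlinarith [par, hb1', hb2']
  -- attain the minima on the unit spheres
  obtain ⟨x₀, hx₀s, hx₀min⟩ := (isCompact_sphere (0 : X) 1).exists_isMinOn
    (NormedSpace.sphere_nonempty.mpr zero_le_one)
    ((S₁.continuous.norm).continuousOn)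
  obtain ⟨y₀, hy₀s, hy₀min⟩ := (isCompact_sphere (0 : Y) 1).exists_isMinOn
    (NormedSpace.sphere_nonempty.mpr zero_le_one)
    ((S₂.continuous.norm).continuousOn)
  have hx₀1 : ‖x₀‖ = 1 := mem_sphere_zero_iff_norm.mp hx₀s
  have hy₀1 : ‖y₀‖ = 1 := mem_sphere_zero_iff_norm.mp hy₀s
  set α := ‖S₁ x₀‖ with hα
  set β := ‖S₂ y₀‖ with hβ
  have hα0 : 0 < α := by
    apply norm_pos_iff.mpr
    intro hc
    have hx₀0 : x₀ ≠ 0 := by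
      intro h0
      rw [h0, norm_zero] at hx₀1
      norm_num at hx₀1
    exact hx₀0 (hS₁inj (by rw [hc, map_zero]))
  have hβ0 : 0 < β := by
    apply norm_pos_iff.mpr
    intro hc
    have hy₀0 : y₀ ≠ 0 := by
      intro h0
      rw [h0, norm_zero] at hy₀1
      norm_num at hy₀1
    exact hy₀0 (hS₂inj (by rw [hc, map_zero]))
  have hαbound : ∀ x : X, α * ‖x‖ ≤ ‖S₁ x‖ := by
    intro x
    rcases eq_or_ne x 0 with rfl | hx
    · simp
    · have hxn : 0 < ‖x‖ := norm_pos_iff.mpr hx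
      have hu : ‖x‖⁻¹ • x ∈ sphere (0 : X) 1 := by
        rw [mem_sphere_zero_iff_norm, norm_smul, Real.norm_eq_abs, abs_of_pos (inv_pos.mpr hxn),
          inv_mul_cancel₀ hxn.ne']
      have hle := hx₀min hu
      simp only [Set.mem_setOf_eq, map_smul, norm_smul, Real.norm_eq_abs,
        abs_of_pos (inv_pos.mpr hxn)] at hle
      -- hle : α ≤ ‖x‖⁻¹ * ‖S₁ x‖
      calc α * ‖x‖ ≤ (‖x‖⁻¹ * ‖S₁ x‖) * ‖x‖ := mul_le_mul_of_nonneg_right hle (norm_nonneg x)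
        _ = ‖S₁ x‖ := by field_simp
  have hβbound : ∀ y : Y, β * ‖y‖ ≤ ‖S₂ y‖ := by
    intro y
    rcases eq_or_ne y 0 with rfl | hy
    · simp
    · have hyn : 0 < ‖y‖ := norm_pos_iff.mpr hy
      have hu : ‖y‖⁻¹ • y ∈ sphere (0 : Y) 1 := by
        rw [mem_sphere_zero_iff_norm, norm_smul, Real.norm_eq_abs, abs_of_pos (inv_pos.mpr hyn),
          inv_mul_cancel₀ hyn.ne']
      have hle := hy₀min hu
      simp only [Set.mem_setOf_eq, map_smul, norm_smul, Real.norm_eq_abs,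
        abs_of_pos (inv_pos.mpr hyn)] at hle
      calc β * ‖y‖ ≤ (‖y‖⁻¹ * ‖S₂ y‖) * ‖y‖ := mul_le_mul_of_nonneg_right hle (norm_nonneg y)
        _ = ‖S₂ y‖ := by field_simp
  -- distance bounds for the pieces
  have dX_le : Real.sqrt (finrank ℝ X) ≤ nT * α⁻¹ := by
    obtain ⟨T', hT1, hT2⟩ := exists_CLE_of_inj S₁ hS₁inj (C₁ := nT) (C₂ := α⁻¹) hS₁up
      (fun x => by
        calc ‖x‖ = α⁻¹ * (α * ‖x‖) := by field_simp
          _ ≤ α⁻¹ * ‖S₁ x‖ := mul_le_mul_of_nonneg_left (hαbound x) (by positivity))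
    calc Real.sqrt (finrank ℝ X) = dBM X (EuclideanSpace ℝ (Fin (finrank ℝ X))) := IHX.symm
      _ ≤ ‖(T' : X →L[ℝ] EuclideanSpace ℝ (Fin (finrank ℝ X)))‖ *
          ‖(T'.symm : EuclideanSpace ℝ (Fin (finrank ℝ X)) →L[ℝ] X)‖ := dBM_le_norms T'
      _ ≤ nT * α⁻¹ := norms_le_of_bounds T' hnT0 (by positivity) hT1 hT2
  have dY_le : Real.sqrt (finrank ℝ Y) ≤ nT * β⁻¹ := by
    obtain ⟨T', hT1, hT2⟩ := exists_CLE_of_inj S₂ hS₂inj (C₁ := nT) (C₂ := β⁻¹) hS₂up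
      (fun y => by
        calc ‖y‖ = β⁻¹ * (β * ‖y‖) := by field_simp
          _ ≤ β⁻¹ * ‖S₂ y‖ := mul_le_mul_of_nonneg_left (hβbound y) (by positivity))
    calc Real.sqrt (finrank ℝ Y) = dBM Y (EuclideanSpace ℝ (Fin (finrank ℝ Y))) := IHY.symm
      _ ≤ ‖(T' : Y →L[ℝ] EuclideanSpace ℝ (Fin (finrank ℝ Y)))‖ *
          ‖(T'.symm : EuclideanSpace ℝ (Fin (finrank ℝ Y)) →L[ℝ] Y)‖ := dBM_le_norms T'
      _ ≤ nT * β⁻¹ := norms_le_of_bounds T' hnT0 (by positivity) hT1 hT2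
  -- 1/α² + 1/β² ≤ nS²
  set s := (α⁻¹) ^ 2 with hs
  set t := (β⁻¹) ^ 2 with ht
  have hspos : 0 < s := by positivity
  have htpos : 0 < t := by positivity
  have hst : s + t ≤ nS ^ 2 := by
    have hk1 := key (s • x₀) (t • y₀)
    have hxs : ‖s • x₀‖ = s := by
      rw [norm_smul, Real.norm_eq_abs, abs_of_pos hspos, hx₀1, mul_one]
    have hys : ‖t • y₀‖ = t := by
      rw [norm_smul, Real.norm_eq_abs, abs_of_pos htpos, hy₀1, mul_one]
    have hS₁s : ‖S₁ (s • x₀)‖ = s * α := by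
      rw [map_smul, norm_smul, Real.norm_eq_abs, abs_of_pos hspos]
    have hS₂s : ‖S₂ (t • y₀)‖ = t * β := by
      rw [map_smul, norm_smul, Real.norm_eq_abs, abs_of_pos htpos]
    rw [hxs, hys, hS₁s, hS₂s] at hk1
    -- hk1 : (s + t)^2 ≤ nS^2 * ((s*α)^2 + (t*β)^2)
    have hsa : (s * α) ^ 2 = s := by
      rw [hs]
      field_simp
    have htb : (t * β) ^ 2 = t := by
      rw [ht]
      field_simp
    rw [hsa, htb] at hk1
    by_contra hcon
    push_neg at hcon
    nlinarith [hk1]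
  -- put everything together
  have h1 : (finrank ℝ X : ℝ) ≤ (nT * α⁻¹) ^ 2 := by
    have hsq := Real.sq_sqrt (by positivity : (0 : ℝ) ≤ (finrank ℝ X : ℝ))
    nlinarith [Real.sqrt_nonneg ((finrank ℝ X : ℝ))]
  have h2 : (finrank ℝ Y : ℝ) ≤ (nT * β⁻¹) ^ 2 := by
    have hsq := Real.sq_sqrt (by positivity : (0 : ℝ) ≤ (finrank ℝ Y : ℝ))
    nlinarith [Real.sqrt_nonneg ((finrank ℝ Y : ℝ))]
  have hsum : (finrank ℝ X : ℝ) + (finrank ℝ Y : ℝ) ≤ (nT * nS) ^ 2 := by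
    have e1 : (nT * α⁻¹) ^ 2 = nT ^ 2 * s := by rw [hs]; ring
    have e2 : (nT * β⁻¹) ^ 2 = nT ^ 2 * t := by rw [ht]; ring
    rw [e1] at h1
    rw [e2] at h2
    nlinarith [sq_nonneg nT]
  calc Real.sqrt ((finrank ℝ X : ℝ) + (finrank ℝ Y : ℝ))
      ≤ Real.sqrt ((nT * nS) ^ 2) := Real.sqrt_le_sqrt hsum
    _ = nT * nS := Real.sqrt_sq (by positivity)

end LowerOne

section Arith

lemma sqrt_add_sq_le {a ε : ℝ} (ha : 0 ≤ a) (hε : 0 < ε) :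
    Real.sqrt (a + ε ^ 2) ≤ Real.sqrt a + ε := by
  have h1 : a + ε ^ 2 ≤ (Real.sqrt a + ε) ^ 2 := by
    nlinarith [Real.sq_sqrt ha, Real.sqrt_nonneg a]
  calc Real.sqrt (a + ε ^ 2) ≤ Real.sqrt ((Real.sqrt a + ε) ^ 2) := Real.sqrt_le_sqrt h1
    _ = Real.sqrt a + ε := Real.sqrt_sq (by positivity)

lemma sqrt_sum_bound {m k ε : ℝ} (hm : 0 ≤ m) (hk : 0 ≤ k) (hε : 0 < ε) :
    ∃ δ : ℝ, 0 < δ ∧ ∀ c₁ c₂ : ℝ, 0 ≤ c₁ → 0 ≤ c₂ →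
      c₁ < Real.sqrt m + δ → c₂ < Real.sqrt k + δ →
      Real.sqrt (c₁ ^ 2 + c₂ ^ 2) ≤ Real.sqrt (m + k) + ε := by
  set sm := Real.sqrt m with hsm
  set sk := Real.sqrt k with hsk
  have hsm0 : 0 ≤ sm := Real.sqrt_nonneg _
  have hsk0 : 0 ≤ sk := Real.sqrt_nonneg _
  have hD : (0:ℝ) < 2 * (sm + sk) + 2 := by positivity
  refine ⟨min 1 (ε ^ 2 / (2 * (sm + sk) + 2)), by positivity, ?_⟩
  set δ := min 1 (ε ^ 2 / (2 * (sm + sk) + 2)) with hδdef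
  intro c₁ c₂ h10 h20 h1 h2
  have hδpos : 0 < δ := by positivity
  have hδ1 : δ ≤ 1 := min_le_left _ _
  have hδ2 : δ ≤ ε ^ 2 / (2 * (sm + sk) + 2) := min_le_right _ _
  have hδD : δ * (2 * (sm + sk) + 2) ≤ ε ^ 2 := (le_div_iff₀ hD).mp hδ2
  have hsm2 : sm ^ 2 = m := Real.sq_sqrt hm
  have hsk2 : sk ^ 2 = k := Real.sq_sqrt hk
  have key : c₁ ^ 2 + c₂ ^ 2 ≤ (m + k) + ε ^ 2 := by nlinarith
  calc Real.sqrt (c₁ ^ 2 + c₂ ^ 2) ≤ Real.sqrt ((m + k) + ε ^ 2) := Real.sqrt_le_sqrt key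
    _ ≤ Real.sqrt (m + k) + ε := sqrt_add_sq_le (by positivity) hε

end Arith

section Rank

lemma finrank_withLp_prod (p : ℝ≥0∞) (α β : Type*) [AddCommGroup α] [Module ℝ α]
    [AddCommGroup β] [Module ℝ β] [Module.Finite ℝ α] [Module.Finite ℝ β] :
    finrank ℝ (WithLp p (α × β)) = finrank ℝ α + finrank ℝ β := by
  rw [(WithLp.linearEquiv p ℝ (α × β)).finrank_eq, Module.finrank_prod]

lemma hanner_basic : ∀ (X : Type) [NormedAddCommGroup X] [NormedSpace ℝ X], IsHanner X →
    FiniteDimensional ℝ X ∧ 0 < finrank ℝ X := by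
  intro X _ _ hX
  induction hX with
  | segment X h => exact ⟨.of_finrank_eq_succ h, by rw [h]; norm_num⟩
  | @sumOne X Y i1 i2 i3 i4 hX hY ihX ihY =>
    obtain ⟨fX, pX⟩ := ihX
    obtain ⟨fY, pY⟩ := ihY
    haveI := fX; haveI := fY
    haveI : FiniteDimensional ℝ (WithLp 1 (X × Y)) :=
      Module.Finite.equiv (WithLp.linearEquiv 1 ℝ (X × Y)).symm
    exact ⟨this, by rw [finrank_withLp_prod]; omega⟩
  | @sumTop X Y i1 i2 i3 i4 hX hY ihX ihY =>
    obtain ⟨fX, pX⟩ := ihX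
    obtain ⟨fY, pY⟩ := ihY
    haveI := fX; haveI := fY
    haveI : FiniteDimensional ℝ (WithLp ∞ (X × Y)) :=
      Module.Finite.equiv (WithLp.linearEquiv ∞ ℝ (X × Y)).symm
    exact ⟨this, by rw [finrank_withLp_prod]; omega⟩
  | @congr X Y i1 i2 i3 i4 hX e ih =>
    obtain ⟨fX, pX⟩ := ih
    haveI := fX
    haveI : FiniteDimensional ℝ Y := Module.Finite.equiv e.toLinearEquiv
    refine ⟨this, ?_⟩
    rw [← e.toLinearEquiv.finrank_eq]
    exact pX

end Rank

section SumCase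

variable {X Y : Type} [NormedAddCommGroup X] [NormedSpace ℝ X]
  [NormedAddCommGroup Y] [NormedSpace ℝ Y]
  [FiniteDimensional ℝ X] [FiniteDimensional ℝ Y]

lemma sum_case_one (hm : 0 < finrank ℝ X) (hk : 0 < finrank ℝ Y)
    (IHX : dBM X (EuclideanSpace ℝ (Fin (finrank ℝ X))) = Real.sqrt (finrank ℝ X))
    (IHY : dBM Y (EuclideanSpace ℝ (Fin (finrank ℝ Y))) = Real.sqrt (finrank ℝ Y)) :
    dBM (WithLp 1 (X × Y)) (EuclideanSpace ℝ (Fin (finrank ℝ (WithLp 1 (X × Y))))) =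
      Real.sqrt (finrank ℝ (WithLp 1 (X × Y))) := by
  haveI : Nontrivial X := Module.nontrivial_of_finrank_pos hm
  haveI : Nontrivial Y := Module.nontrivial_of_finrank_pos hk
  have hfr : finrank ℝ (WithLp 1 (X × Y)) = finrank ℝ X + finrank ℝ Y :=
    finrank_withLp_prod 1 X Y
  rw [hfr]
  have hcast : ((finrank ℝ X + finrank ℝ Y : ℕ) : ℝ) =
      (finrank ℝ X : ℝ) + (finrank ℝ Y : ℝ) := by push_cast; ring
  have hmpos : (0:ℝ) < Real.sqrt (finrank ℝ X) :=
    Real.sqrt_pos.mpr (by exact_mod_cast hm)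
  have hkpos : (0:ℝ) < Real.sqrt (finrank ℝ Y) :=
    Real.sqrt_pos.mpr (by exact_mod_cast hk)
  have hfr2 : finrank ℝ (WithLp 2 (EuclideanSpace ℝ (Fin (finrank ℝ X)) ×
      EuclideanSpace ℝ (Fin (finrank ℝ Y)))) = finrank ℝ X + finrank ℝ Y := by
    rw [finrank_withLp_prod]
    simp
  let iso : WithLp 2 (EuclideanSpace ℝ (Fin (finrank ℝ X)) ×
      EuclideanSpace ℝ (Fin (finrank ℝ Y))) ≃ₗᵢ[ℝ]
      EuclideanSpace ℝ (Fin (finrank ℝ X + finrank ℝ Y)) :=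
    ((stdOrthonormalBasis ℝ _).reindex (finCongr hfr2)).repr
  apply le_antisymm
  · apply le_of_forall_pos_le_add
    intro ε hε
    obtain ⟨δ, hδpos, harith⟩ := sqrt_sum_bound (m := (finrank ℝ X : ℝ))
      (k := (finrank ℝ Y : ℝ)) (by positivity) (by positivity) hε
    obtain ⟨T₁, hT₁⟩ := exists_CLE_lt IHX hmpos hδpos
    obtain ⟨T₂, hT₂⟩ := exists_CLE_lt IHY hkpos hδpos
    obtain ⟨T, hb1, hb2⟩ := sum_one_upper T₁ T₂
    obtain ⟨T', hb1', hb2'⟩ := CLE_trans_iso T iso hb1 hb2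
    have hval := norms_le_of_bounds T' zero_le_one (Real.sqrt_nonneg _) hb1' hb2'
    refine (dBM_le_norms T').trans (hval.trans ?_)
    rw [one_mul, hcast]
    exact harith _ _ (by positivity) (by positivity) hT₁ hT₂
  · apply le_csInf
    · obtain ⟨T₁, _⟩ := exists_CLE_lt IHX hmpos one_pos
      obtain ⟨T₂, _⟩ := exists_CLE_lt IHY hkpos one_pos
      obtain ⟨T, hb1, hb2⟩ := sum_one_upper T₁ T₂
      obtain ⟨T', _, _⟩ := CLE_trans_iso T iso hb1 hb2
      exact ⟨_, T', rfl⟩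
    · rintro c ⟨T, rfl⟩
      rw [hcast]
      exact sum_one_lower hm hk IHX IHY T

lemma sum_case_top (hm : 0 < finrank ℝ X) (hk : 0 < finrank ℝ Y)
    (IHX : dBM X (EuclideanSpace ℝ (Fin (finrank ℝ X))) = Real.sqrt (finrank ℝ X))
    (IHY : dBM Y (EuclideanSpace ℝ (Fin (finrank ℝ Y))) = Real.sqrt (finrank ℝ Y)) :
    dBM (WithLp ∞ (X × Y)) (EuclideanSpace ℝ (Fin (finrank ℝ (WithLp ∞ (X × Y))))) =
      Real.sqrt (finrank ℝ (WithLp ∞ (X × Y))) := by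
  haveI : Nontrivial X := Module.nontrivial_of_finrank_pos hm
  haveI : Nontrivial Y := Module.nontrivial_of_finrank_pos hk
  have hfr : finrank ℝ (WithLp ∞ (X × Y)) = finrank ℝ X + finrank ℝ Y :=
    finrank_withLp_prod ∞ X Y
  rw [hfr]
  have hcast : ((finrank ℝ X + finrank ℝ Y : ℕ) : ℝ) =
      (finrank ℝ X : ℝ) + (finrank ℝ Y : ℝ) := by push_cast; ring
  have hmpos : (0:ℝ) < Real.sqrt (finrank ℝ X) :=
    Real.sqrt_pos.mpr (by exact_mod_cast hm)
  have hkpos : (0:ℝ) < Real.sqrt (finrank ℝ Y) :=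
    Real.sqrt_pos.mpr (by exact_mod_cast hk)
  have hfr2 : finrank ℝ (WithLp 2 (EuclideanSpace ℝ (Fin (finrank ℝ X)) ×
      EuclideanSpace ℝ (Fin (finrank ℝ Y)))) = finrank ℝ X + finrank ℝ Y := by
    rw [finrank_withLp_prod]
    simp
  let iso : WithLp 2 (EuclideanSpace ℝ (Fin (finrank ℝ X)) ×
      EuclideanSpace ℝ (Fin (finrank ℝ Y))) ≃ₗᵢ[ℝ]
      EuclideanSpace ℝ (Fin (finrank ℝ X + finrank ℝ Y)) :=
    ((stdOrthonormalBasis ℝ _).reindex (finCongr hfr2)).repr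
  apply le_antisymm
  · apply le_of_forall_pos_le_add
    intro ε hε
    obtain ⟨δ, hδpos, harith⟩ := sqrt_sum_bound (m := (finrank ℝ X : ℝ))
      (k := (finrank ℝ Y : ℝ)) (by positivity) (by positivity) hε
    obtain ⟨T₁, hT₁⟩ := exists_CLE_lt IHX hmpos hδpos
    obtain ⟨T₂, hT₂⟩ := exists_CLE_lt IHY hkpos hδpos
    obtain ⟨T, hb1, hb2⟩ := sum_top_upper T₁ T₂
    obtain ⟨T', hb1', hb2'⟩ := CLE_trans_iso T iso hb1 hb2
    have hval := norms_le_of_bounds T' (Real.sqrt_nonneg _) zero_le_one hb1' hb2'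
    refine (dBM_le_norms T').trans (hval.trans ?_)
    rw [mul_one, hcast]
    exact harith _ _ (by positivity) (by positivity) hT₁ hT₂
  · apply le_csInf
    · obtain ⟨T₁, _⟩ := exists_CLE_lt IHX hmpos one_pos
      obtain ⟨T₂, _⟩ := exists_CLE_lt IHY hkpos one_pos
      obtain ⟨T, hb1, hb2⟩ := sum_top_upper T₁ T₂
      obtain ⟨T', _, _⟩ := CLE_trans_iso T iso hb1 hb2
      exact ⟨_, T', rfl⟩
    · rintro c ⟨T, rfl⟩
      rw [hcast]
      exact sum_top_lower hm hk IHX IHY T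

end SumCase

theorem hanner_dBM : ∀ (X : Type) [NormedAddCommGroup X] [NormedSpace ℝ X], IsHanner X →
    dBM X (EuclideanSpace ℝ (Fin (finrank ℝ X))) = Real.sqrt (finrank ℝ X) := by
  intro X _ _ hX
  induction hX with
  | segment X h =>
    rw [h, one_dim_dBM h]
    norm_num
  | @sumOne X Y i1 i2 i3 i4 hX hY ihX ihY =>
    obtain ⟨fX, pX⟩ := hanner_basic X hX
    obtain ⟨fY, pY⟩ := hanner_basic Y hY
    haveI := fX; haveI := fY
    exact sum_case_one pX pY ihX ihY
  | @sumTop X Y i1 i2 i3 i4 hX hY ihX ihY =>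
    obtain ⟨fX, pX⟩ := hanner_basic X hX
    obtain ⟨fY, pY⟩ := hanner_basic Y hY
    haveI := fX; haveI := fY
    exact sum_case_top pX pY ihX ihY
  | @congr X Y i1 i2 i3 i4 hX e ih =>
    obtain ⟨fX, pX⟩ := hanner_basic X hX
    haveI := fX
    rw [show finrank ℝ Y = finrank ℝ X from e.toLinearEquiv.finrank_eq.symm]
    have hmpos : (0:ℝ) < Real.sqrt (finrank ℝ X) :=
      Real.sqrt_pos.mpr (by exact_mod_cast pX)
    apply le_antisymm
    · apply le_of_forall_pos_le_add
      intro ε hε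
      obtain ⟨T, hT⟩ := exists_CLE_lt ih hmpos hε
      calc dBM Y (EuclideanSpace ℝ (Fin (finrank ℝ X)))
          ≤ ‖((e.symm.toContinuousLinearEquiv.trans T) :
              Y →L[ℝ] EuclideanSpace ℝ (Fin (finrank ℝ X)))‖ *
            ‖((e.symm.toContinuousLinearEquiv.trans T).symm :
              EuclideanSpace ℝ (Fin (finrank ℝ X)) →L[ℝ] Y)‖ := dBM_le_norms _
        _ = ‖(T : X →L[ℝ] EuclideanSpace ℝ (Fin (finrank ℝ X)))‖ *
            ‖(T.symm : EuclideanSpace ℝ (Fin (finrank ℝ X)) →L[ℝ] X)‖ :=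
            norms_iso_trans e.symm T
        _ ≤ Real.sqrt (finrank ℝ X) + ε := hT.le
    · apply le_csInf
      · obtain ⟨T, _⟩ := exists_CLE_lt ih hmpos one_pos
        exact ⟨_, e.symm.toContinuousLinearEquiv.trans T, rfl⟩
      · rintro c ⟨S, rfl⟩
        calc Real.sqrt (finrank ℝ X)
            ≤ ‖((e.toContinuousLinearEquiv.trans S) :
                X →L[ℝ] EuclideanSpace ℝ (Fin (finrank ℝ X)))‖ *
              ‖((e.toContinuousLinearEquiv.trans S).symm :
                EuclideanSpace ℝ (Fin (finrank ℝ X)) →L[ℝ] X)‖ :=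
              le_norms_of_dBM_eq ih _
          _ = ‖(S : Y →L[ℝ] EuclideanSpace ℝ (Fin (finrank ℝ X)))‖ *
              ‖(S.symm : EuclideanSpace ℝ (Fin (finrank ℝ X)) →L[ℝ] Y)‖ :=
              norms_iso_trans e S

/-- every Hanner polytope in `ℝⁿ` has Banach–Mazur distance `√n`
to the Euclidean ball. -/
theorem stmt_12 (n : ℕ) (X : Type) [NormedAddCommGroup X] [NormedSpace ℝ X]
    (hX : IsHanner X) (hn : Module.finrank ℝ X = n) :
    dBM X (EuclideanSpace ℝ (Fin n)) = Real.sqrt n := by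
  subst hn
  exact hanner_dBM X hX
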